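/- arXiv:2210.06347 — 3 statements merged into one kernel-verified Lean document; each statement's English description precedes it below -/
import Mathlib

section
/- For F the sign function (F(x) = 1 for x > 0, F(x) = -1 for x < 0, F(0) = 0), any m ≥ 2, any k ∈ {1,...,m}, and any nonzero vector c ∈ ℝ^m, the Gaussian integral (2π)^{-m/2} ∫_{ℝ^m} F(⟨c,x⟩) x_k e^{-|x|²/2} dx equals √(2/π) · c_k/|c|. -/
open MeasureTheory Real Set Filter
open scoped RealInnerProductSpace

noncomputable def sgn' (t : ℝ) : ℝ := if 0 < t then 1 else if t < 0 then -1 else 0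

lemma sgn'_neg (t : ℝ) : sgn' (-t) = - sgn' t := by
  unfold sgn'
  rcases lt_trichotomy t 0 with h | h | h
  · simp [h, not_lt.mpr h.le, neg_pos.mpr h]
  · simp [h]
  · simp [h, not_lt.mpr h.le, neg_lt_zero.mpr h, not_lt_of_gt h]

lemma sgn'_mul_self (t : ℝ) : sgn' t * t = |t| := by
  unfold sgn'
  rcases lt_trichotomy t 0 with h | h | h
  · simp [not_lt.mpr h.le, h, abs_of_neg h]
  · simp [h]
  · simp [h, abs_of_pos h]

lemma sgn'_abs_le (t : ℝ) : |sgn' t| ≤ 1 := by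
  unfold sgn'
  rcases lt_trichotomy t 0 with h | h | h
  · simp [h, not_lt.mpr h.le]
  · simp [h]
  · simp [h, not_lt.mpr h.le]

lemma sgn'_measurable : Measurable sgn' := by
  unfold sgn'
  apply Measurable.ite (measurableSet_lt measurable_const measurable_id)
    measurable_const
  exact Measurable.ite (measurableSet_lt measurable_id measurable_const)
    measurable_const measurable_const

lemma odd_int (f : ℝ → ℝ) (h : ∀ x, f (-x) = - f x) : ∫ x : ℝ, f x = 0 := by
  have h1 : ∫ x : ℝ, f (-x) = ∫ x : ℝ, f x := integral_neg_eq_self f volume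
  have h2 : ∫ x : ℝ, f (-x) = - ∫ x : ℝ, f x := by
    simp_rw [h]; exact integral_neg f
  linarith

lemma int_exp : ∫ y : ℝ, exp (-y^2/2) = Real.sqrt (2*π) := by
  have := integral_gaussian (1/2)
  simp_rw [show ∀ y : ℝ, -(1/2 : ℝ) * y^2 = -y^2/2 by intro y; ring] at this
  rw [this]
  rw [div_div_eq_mul_div, div_one, mul_comm]

lemma int_x_exp : ∫ y : ℝ, y * exp (-y^2/2) = 0 :=
  odd_int _ (fun x => by simp [neg_sq])

lemma int_sgn_exp : ∫ y : ℝ, sgn' y * exp (-y^2/2) = 0 :=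
  odd_int _ (fun x => by rw [sgn'_neg, neg_sq]; ring)

lemma int_Ioi : ∫ y in Ioi (0:ℝ), y * exp (-y^2/2) = 1 := by
  have : ∫ y in Ioi (0:ℝ), y * exp (-y^2/2) = 0 - (fun x : ℝ => -exp (-x^2/2)) 0 := by
    apply integral_Ioi_of_hasDerivAt_of_tendsto'
      (f := fun x : ℝ => -exp (-x^2/2)) (f' := fun y : ℝ => y * exp (-y^2/2))
    · intro x _
      have h1 : HasDerivAt (fun x : ℝ => -x^2/2) (-x) x := by
        exact ((hasDerivAt_pow 2 x).neg.div_const 2).congr_deriv (by ring)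
      have := (h1.exp).neg
      exact this.congr_deriv (by ring)
    · have := (integrable_mul_exp_neg_mul_sq (b := 1/2) (by norm_num)).integrableOn (s := Ioi 0)
      apply this.congr_fun (fun x _ => ?_) measurableSet_Ioi
      ring_nf
    · have hb : Tendsto (fun x : ℝ => -x^2/2) atTop atBot := by
        have h2 : Tendsto (fun x : ℝ => x^2/2) atTop atTop :=
          (tendsto_pow_atTop (by norm_num)).atTop_div_const (by norm_num)
        exact (tendsto_neg_atTop_atBot.comp h2).congr (fun x => by simp [Function.comp]; ring)
      have : Tendsto (fun x : ℝ => exp (-x^2/2)) atTop (nhds 0) :=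
        Real.tendsto_exp_atBot.comp hb
      simpa using this.neg
  simp at this
  rw [this]

lemma int_abs_exp : ∫ y : ℝ, |y| * exp (-y^2/2) = 2 := by
  have : ∫ y : ℝ, |y| * exp (-(|y|)^2/2) = 2 * ∫ y in Ioi (0:ℝ), y * exp (-y^2/2) :=
    integral_comp_abs (f := fun x : ℝ => x * exp (-x^2/2))
  simp_rw [sq_abs] at this
  rw [this, int_Ioi, mul_one]

lemma int_sgn_x_exp : ∫ y : ℝ, sgn' y * y * exp (-y^2/2) = 2 := by
  simp_rw [sgn'_mul_self]; exact int_abs_exp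

lemma integ_exp : Integrable (fun y : ℝ => exp (-y^2/2)) := by
  have := integrable_exp_neg_mul_sq (b := 1/2) (by norm_num)
  apply this.congr' ?_ ?_
  · exact this.aestronglyMeasurable.congr (by filter_upwards with x; ring_nf)
  · filter_upwards with x; rw [Real.norm_eq_abs, Real.norm_eq_abs]; ring_nf

lemma integ_x_exp : Integrable (fun y : ℝ => y * exp (-y^2/2)) := by
  have := integrable_mul_exp_neg_mul_sq (b := 1/2) (by norm_num)
  apply this.congr (by filter_upwards with x; ring_nf)

lemma integ_sgn_exp : Integrable (fun y : ℝ => sgn' y * exp (-y^2/2)) := by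
  apply integ_exp.mono' ((sgn'_measurable.mul (by fun_prop)).aestronglyMeasurable)
  filter_upwards with t
  simp only [Pi.mul_apply]
  rw [Real.norm_eq_abs, abs_mul, abs_of_pos (exp_pos _)]
  calc |sgn' t| * exp (-t^2/2) ≤ 1 * exp (-t^2/2) :=
        mul_le_mul_of_nonneg_right (sgn'_abs_le t) (exp_pos _).le
    _ = exp (-t^2/2) := one_mul _
  
lemma integ_sgn_x_exp : Integrable (fun y : ℝ => sgn' y * y * exp (-y^2/2)) := by
  apply integ_x_exp.abs.mono'
    (((sgn'_measurable.mul measurable_id).mul (by fun_prop)).aestronglyMeasurable)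
  filter_upwards with t
  simp only [Real.norm_eq_abs, Pi.mul_apply, abs_mul, id_eq, abs_abs]
  apply mul_le_mul_of_nonneg_right _ (abs_nonneg _)
  calc |sgn' t| * |t| ≤ 1 * |t| := mul_le_mul_of_nonneg_right (sgn'_abs_le t) (abs_nonneg _)
    _ = |t| := one_mul _

lemma pi_step (m : ℕ) [NeZero m] (a : Fin m → ℝ) :
    ∫ z : Fin m → ℝ, sgn' (z 0) * (∑ i, z i * a i) * ∏ j, exp (-(z j)^2/2)
      = a 0 * (2 * Real.sqrt (2*π) ^ (m-1)) := by
  classical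
  set f : Fin m → Fin m → ℝ → ℝ := fun i j t =>
    (if j = 0 then sgn' t else 1) * (if j = i then t else 1) * exp (-t^2/2) with hf
  have hfint : ∀ i j, Integrable (f i j) := by
    intro i j
    by_cases h0 : j = 0
    · subst h0
      by_cases hi : (0 : Fin m) = i
      · simpa [hf, hi] using integ_sgn_x_exp
      · simpa [hf, hi] using integ_sgn_exp
    · by_cases hi : j = i
      · subst hi
        simpa [hf, h0] using integ_x_exp
      · simpa [hf, h0, hi] using integ_exp
  have hprod : ∀ i (z : Fin m → ℝ),
      (∏ j, f i j (z j)) = sgn' (z 0) * z i * ∏ j, exp (-(z j)^2/2) := by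
    intro i z
    simp only [hf]
    rw [Finset.prod_mul_distrib, Finset.prod_mul_distrib]
    congr 1
    congr 1
    · simp [Finset.prod_ite_eq' Finset.univ (0 : Fin m) (fun j => sgn' (z j))]
    · simp [Finset.prod_ite_eq' Finset.univ i (fun j => z j)]
  have step1 : ∀ z : Fin m → ℝ,
      sgn' (z 0) * (∑ i, z i * a i) * ∏ j, exp (-(z j)^2/2)
        = ∑ i, a i * ∏ j, f i j (z j) := by
    intro z
    rw [Finset.mul_sum, Finset.sum_mul]
    refine Finset.sum_congr rfl (fun i _ => ?_)
    rw [hprod]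
    ring
  simp_rw [step1]
  rw [integral_finset_sum (μ := volume) _
    (fun i _ => ((Integrable.fintype_prod (f := f i) (hfint i)).const_mul (a i)))]
  have hfub : ∀ i, (∫ z : Fin m → ℝ, ∏ j, f i j (z j)) = ∏ j, ∫ t, f i j t :=
    fun i => integral_fintype_prod_eq_prod (ι := Fin m) (f i)
  simp_rw [integral_const_mul, hfub]
  have hval : ∀ i, (∏ j, ∫ t, f i j t) = if i = 0 then 2 * Real.sqrt (2*π) ^ (m-1) else 0 := by
    intro i
    by_cases hi : i = 0
    · subst hi
      rw [if_pos rfl]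
      have hf0 : ∀ j, (∫ t, f 0 j t) = if j = 0 then 2 else Real.sqrt (2*π) := by
        intro j
        by_cases h : j = 0
        · subst h
          simpa [hf] using int_sgn_x_exp
        · rw [if_neg h]
          simp only [hf, if_neg h]
          simpa using int_exp
      simp_rw [hf0]
      rw [← Finset.mul_prod_erase Finset.univ _ (Finset.mem_univ (0 : Fin m)), if_pos rfl]
      congr 1
      rw [Finset.prod_congr rfl (fun j hj => if_neg (Finset.mem_erase.mp hj).1),
        Finset.prod_const, Finset.card_erase_of_mem (Finset.mem_univ _), Finset.card_univ,
        Fintype.card_fin]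
    · rw [if_neg hi]
      apply Finset.prod_eq_zero (Finset.mem_univ i)
      have : ∀ t : ℝ, f i i t = t * exp (-t^2/2) := by
        intro t
        simp [hf, hi]
      simp_rw [this]
      exact int_x_exp
  simp_rw [hval, mul_ite, mul_zero, Finset.sum_ite_eq' Finset.univ (0 : Fin m),
    if_pos (Finset.mem_univ _)]

lemma final_arith (m : ℕ) (hm : 2 ≤ m) (r : ℝ) :
    (2*π) ^ (-(m:ℝ)/2) * (r * (2 * Real.sqrt (2*π) ^ (m-1))) = Real.sqrt (2/π) * r := by
  have h2π : (0:ℝ) < 2*π := by positivity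
  have hπ : (0:ℝ) < π := pi_pos
  have h1 : Real.sqrt (2*π) ^ (m-1) = (2*π) ^ (((m:ℝ)-1)/2) := by
    rw [Real.sqrt_eq_rpow, ← Real.rpow_natCast ((2*π) ^ (1/2 : ℝ)) (m-1),
      ← Real.rpow_mul h2π.le]
    congr 1
    rw [Nat.cast_sub (by omega)]
    push_cast
    ring
  have hE : (-(m:ℝ)/2) + (((m:ℝ)-1)/2) = -(1/2 : ℝ) := by ring
  calc (2*π) ^ (-(m:ℝ)/2) * (r * (2 * Real.sqrt (2*π) ^ (m-1)))
      = r * (2 * ((2*π) ^ (-(m:ℝ)/2) * (2*π) ^ (((m:ℝ)-1)/2))) := by rw [h1]; ring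
    _ = r * (2 * (2*π) ^ (-(1/2 : ℝ))) := by rw [← Real.rpow_add h2π, hE]
    _ = Real.sqrt (2/π) * r := by
        rw [Real.rpow_neg h2π.le, ← Real.sqrt_eq_rpow]
        have hs2 : Real.sqrt 2 * Real.sqrt 2 = 2 := Real.mul_self_sqrt (by norm_num)
        have hsm : Real.sqrt (2*π) = Real.sqrt 2 * Real.sqrt π :=
          Real.sqrt_mul (by norm_num) π
        have hsd : Real.sqrt (2/π) = Real.sqrt 2 / Real.sqrt π :=
          Real.sqrt_div' 2 hπ.le
        rw [hsd, hsm, show (2:ℝ) = Real.sqrt 2 * Real.sqrt 2 from hs2.symm]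
        have h2ne : Real.sqrt 2 ≠ 0 := by positivity
        have hπne : Real.sqrt π ≠ 0 := by positivity
        field_simp
        rw [Real.sqrt_sq (Real.sqrt_nonneg 2)]

/-- Gaussian integral of sign(⟨c,x⟩)·x_k equals √(2/π)·c_k/|c|. -/
theorem stmt_0 (m : ℕ) (hm : 2 ≤ m) (k : Fin m)
    (c : EuclideanSpace ℝ (Fin m)) (hc : c ≠ 0) :
    (2 * π) ^ (-(m : ℝ) / 2) *
      ∫ x : EuclideanSpace ℝ (Fin m),
        (if 0 < ⟪c, x⟫ then (1 : ℝ) else if ⟪c, x⟫ < 0 then -1 else 0) *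
          x k * Real.exp (-‖x‖ ^ 2 / 2)
    = Real.sqrt (2 / π) * (c k / ‖c‖) := by
  classical
  haveI : NeZero m := ⟨by omega⟩
  have hcn : (0:ℝ) < ‖c‖ := norm_pos_iff.mpr hc
  set u : EuclideanSpace ℝ (Fin m) := ‖c‖⁻¹ • c with hu_def
  have hu : ‖u‖ = 1 := norm_smul_inv_norm hc
  have hcu : c = ‖c‖ • u := by rw [hu_def, smul_smul, mul_inv_cancel₀ hcn.ne', one_smul]
  obtain ⟨b, hb0⟩ : ∃ b : OrthonormalBasis (Fin m) ℝ (EuclideanSpace ℝ (Fin m)), b 0 = u := by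
    have hcard : Module.finrank ℝ (EuclideanSpace ℝ (Fin m)) = Fintype.card (Fin m) := by
      simp
    haveI : Subsingleton (({0} : Set (Fin m))) :=
      ⟨fun x y => Subtype.ext ((Set.mem_singleton_iff.mp x.2).trans
        (Set.mem_singleton_iff.mp y.2).symm)⟩
    have hv : Orthonormal ℝ (({0} : Set (Fin m)).restrict (fun _ : Fin m => u)) :=
      ⟨fun i => hu, fun i j hij => absurd (Subsingleton.elim i j) hij⟩
    obtain ⟨b, hb⟩ := hv.exists_orthonormalBasis_extension_of_card_eq hcard
    exact ⟨b, hb 0 rfl⟩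
  have hA : (∫ x : EuclideanSpace ℝ (Fin m),
        (if 0 < ⟪c, x⟫ then (1 : ℝ) else if ⟪c, x⟫ < 0 then -1 else 0) *
          x k * Real.exp (-‖x‖ ^ 2 / 2))
      = ∫ y : EuclideanSpace ℝ (Fin m),
          sgn' (y 0) * (∑ i, y i * (b i) k) * Real.exp (-‖y‖ ^ 2 / 2) := by
    rw [← (b.measurePreserving_repr_symm).integral_comp
      b.repr.symm.toHomeomorph.measurableEmbedding]
    refine integral_congr_ae (Filter.Eventually.of_forall (fun y => ?_))
    have h1 : ⟪c, b.repr.symm y⟫ = ‖c‖ * y 0 := by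
      nth_rewrite 1 [hcu]
      rw [real_inner_smul_left, ← hb0, ← OrthonormalBasis.repr_apply_apply,
        LinearIsometryEquiv.apply_symm_apply]
    have h2 : (b.repr.symm y) k = ∑ i, y i * (b i) k := by
      rw [← OrthonormalBasis.sum_repr_symm]
      have := map_sum (PiLp.proj (𝕜 := ℝ) 2 (fun _ : Fin m => ℝ) k)
        (fun i => y i • b i) Finset.univ
      simp only [PiLp.proj_apply, PiLp.smul_apply, smul_eq_mul] at this
      exact this
    have h3 : ‖(b.repr.symm y : EuclideanSpace ℝ (Fin m))‖ = ‖y‖ :=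
      LinearIsometryEquiv.norm_map _ _
    dsimp only
    rw [h1, h2, h3]
    have hsg : (if 0 < ‖c‖ * y 0 then (1:ℝ) else if ‖c‖ * y 0 < 0 then -1 else 0)
        = sgn' (y 0) := by
      unfold sgn'
      rcases lt_trichotomy (y 0) 0 with h | h | h
      · rw [if_neg (by nlinarith), if_pos (by nlinarith), if_neg (not_lt_of_gt h),
          if_pos h]
      · simp [h]
      · rw [if_pos (by nlinarith), if_pos h]
    rw [hsg]
  have hB : (∫ y : EuclideanSpace ℝ (Fin m),
        sgn' (y 0) * (∑ i, y i * (b i) k) * Real.exp (-‖y‖ ^ 2 / 2))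
      = ∫ z : Fin m → ℝ, sgn' (z 0) * (∑ i, z i * (b i) k) * ∏ j, exp (-(z j)^2/2) := by
    rw [← ((EuclideanSpace.volume_preserving_symm_measurableEquiv_toLp (ι := Fin m)).symm).integral_comp
      (MeasurableEquiv.measurableEmbedding _)]
    refine integral_congr_ae (Filter.Eventually.of_forall (fun z => ?_))
    have happ : ∀ i, ((MeasurableEquiv.toLp 2 (Fin m → ℝ)).symm.symm z) i = z i :=
      fun i => rfl
    have hnorm : -‖((MeasurableEquiv.toLp 2 (Fin m → ℝ)).symm.symm z :
        EuclideanSpace ℝ (Fin m))‖ ^ 2 / 2 = ∑ i, (-(z i)^2/2) := by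
      rw [EuclideanSpace.norm_eq, Real.sq_sqrt (by positivity)]
      simp_rw [happ, Real.norm_eq_abs, sq_abs]
      rw [← Finset.sum_div, ← Finset.sum_neg_distrib]
    dsimp only
    rw [hnorm, Real.exp_sum]
    simp_rw [happ]
  rw [hA, hB, pi_step m (fun i => (b i) k), hb0]
  have ha0 : u k = ‖c‖⁻¹ * c k := by rfl
  rw [ha0]
  have := final_arith m hm (‖c‖⁻¹ * c k)
  rw [this]
  congr 1
  rw [inv_mul_eq_div]  -- c k / ‖c‖ vs ‖c‖⁻¹ * c k
end

section
/- Let m ≥ 2 and suppose there is c₀ > 0 with λ_k ≥ c₀ k² for all k ≥ 1, where (λ_k) are positive reals. Then for every t > 0, the quantity |c(t)| := (∑_{k=1}^m (1 - e^{-2λ_k t})/(2λ_k))^{1/2} satisfies |c(t)| ≤ (2πt/c₀)^{1/4}. -/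
open MeasureTheory Real

lemma aux_tel (K : ℕ) (hK : 1 ≤ K) (m : ℕ) :
    ∑ k ∈ Finset.Icc (K+1) m, (1:ℝ)/(k:ℝ)^2 ≤ 1/(K:ℝ) - 1/((max K m : ℕ):ℝ) := by
  induction m with
  | zero => simp [hK, Nat.max_eq_left]
  | succ m ih =>
    rcases le_or_gt (m+1) K with h | h
    · rw [Finset.Icc_eq_empty (by omega), Nat.max_eq_left h]
      simp
    · have hKm : K ≤ m := by omega
      rw [Finset.sum_Icc_succ_top (by omega), Nat.max_eq_right (by omega : K ≤ m+1)]
      rw [Nat.max_eq_right hKm] at ih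
      have hm1 : (1:ℝ) ≤ (m:ℝ) := by exact_mod_cast hK.trans hKm
      have key : (1:ℝ)/((m+1:ℕ):ℝ)^2 ≤ 1/(m:ℝ) - 1/((m+1:ℕ):ℝ) := by
        push_cast
        rw [div_sub_div _ _ (by linarith) (by linarith), div_le_div_iff₀ (by positivity) (by positivity)]
        ring_nf
        nlinarith
      linarith

lemma aux_sum2 (m : ℕ) : ∑ k ∈ Finset.Icc 1 m, (1:ℝ)/(k:ℝ)^2 ≤ 2 := by
  rcases Nat.eq_zero_or_pos m with h | h
  · simp [h]
  · have := aux_tel 1 le_rfl m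
    rw [show Finset.Icc 1 m = insert 1 (Finset.Icc 2 m) by ext x; simp; omega,
      Finset.sum_insert (by simp)]
    have h2 : (0:ℝ) ≤ 1/((max 1 m : ℕ):ℝ) := by positivity
    norm_num at this ⊢
    have h3 : (0:ℝ) ≤ ((1:ℝ) ⊔ (m:ℝ))⁻¹ := by positivity
    linarith

theorem stmt_6 (m : ℕ) (hm : 2 ≤ m) (lam : ℕ → ℝ) (hpos : ∀ k : ℕ, 1 ≤ k → 0 < lam k)
    (c₀ : ℝ) (hc₀ : 0 < c₀) (hlow : ∀ k : ℕ, 1 ≤ k → c₀ * (k : ℝ) ^ 2 ≤ lam k)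
    (t : ℝ) (ht : 0 < t) :
    Real.sqrt (∑ k ∈ Finset.Icc 1 m, (1 - Real.exp (-2 * lam k * t)) / (2 * lam k))
      ≤ (2 * π * t / c₀) ^ ((1 : ℝ) / 4) := by
  set a : ℝ := 1/(2*c₀) with ha
  have ha0 : 0 < a := by positivity
  have hX0 : (0:ℝ) ≤ 2 * π * t / c₀ := by positivity
  -- termwise bounds
  have hterm_t : ∀ k : ℕ, 1 ≤ k → (1 - Real.exp (-2 * lam k * t)) / (2 * lam k) ≤ t := by
    intro k hk
    have hl := hpos k hk
    rw [div_le_iff₀ (by linarith)]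
    have := Real.add_one_le_exp (-2 * lam k * t)
    nlinarith
  have hterm_a : ∀ k : ℕ, 1 ≤ k → (1 - Real.exp (-2 * lam k * t)) / (2 * lam k) ≤ a / (k:ℝ)^2 := by
    intro k hk
    have hl := hpos k hk
    have hk1 : (1:ℝ) ≤ (k:ℝ) := by exact_mod_cast hk
    have hlo := hlow k hk
    have hexp := Real.exp_pos (-2 * lam k * t)
    have h1 : (1 - Real.exp (-2 * lam k * t)) / (2 * lam k) ≤ 1 / (2 * lam k) := by
      gcongr
      linarith
    refine h1.trans ?_
    rw [ha, div_div]
    apply one_div_le_one_div_of_le (by positivity)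
    nlinarith
  -- main bound on the sum
  have hmain : ∑ k ∈ Finset.Icc 1 m, (1 - Real.exp (-2 * lam k * t)) / (2 * lam k)
      ≤ Real.sqrt (2 * π * t / c₀) := by
    have hpi := Real.pi_gt_three
    rcases le_or_gt a t with hA | hB
    · -- large time: bound each term by a/k^2
      have hsum : ∑ k ∈ Finset.Icc 1 m, (1 - Real.exp (-2 * lam k * t)) / (2 * lam k)
          ≤ ∑ k ∈ Finset.Icc 1 m, a / (k:ℝ)^2 :=
        Finset.sum_le_sum (fun k hk => hterm_a k (Finset.mem_Icc.mp hk).1)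
      have h2a : ∑ k ∈ Finset.Icc 1 m, a / (k:ℝ)^2 ≤ 2 * a := by
        have h := aux_sum2 m
        calc ∑ k ∈ Finset.Icc 1 m, a / (k:ℝ)^2
            = a * ∑ k ∈ Finset.Icc 1 m, (1:ℝ)/(k:ℝ)^2 := by
              rw [Finset.mul_sum]; exact Finset.sum_congr rfl (fun k _ => by ring)
          _ ≤ a * 2 := by nlinarith
          _ = 2 * a := by ring
      have hfin : 2 * a ≤ Real.sqrt (2 * π * t / c₀) := by
        rw [show (2:ℝ)*a = Real.sqrt ((2*a)^2) from (Real.sqrt_sq (by positivity)).symm]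
        apply Real.sqrt_le_sqrt
        rw [le_div_iff₀ hc₀]
        have h1 : 1 ≤ 2 * c₀ * t := by
          rw [ha] at hA
          rw [div_le_iff₀ (by positivity)] at hA
          linarith
        have h2 : (2*a)^2 * c₀ = 1/c₀ := by rw [ha]; field_simp
        rw [h2, div_le_iff₀ hc₀]
        nlinarith [mul_pos (mul_pos ht hc₀) hc₀, mul_pos ht hc₀]
      linarith
    · -- small time
      set K : ℕ := ⌈Real.sqrt (a/t)⌉₊ with hKdef
      set u : ℝ := Real.sqrt (a*t) with hu
      have hat : 1 ≤ a / t := (one_le_div ht).mpr hB.le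
      have hs1 : 1 ≤ Real.sqrt (a/t) := by
        rw [show (1:ℝ) = Real.sqrt 1 from Real.sqrt_one.symm]
        exact Real.sqrt_le_sqrt hat
      have hspos : 0 < Real.sqrt (a/t) := by linarith
      have hK1 : 1 ≤ K := Nat.one_le_iff_ne_zero.mpr (by
        simp only [hKdef, ne_eq, Nat.ceil_eq_zero, not_le]; linarith)
      have hKpos : (0:ℝ) < (K:ℝ) := by exact_mod_cast hK1
      have hKge : Real.sqrt (a/t) ≤ (K:ℝ) := Nat.le_ceil _
      have hKle : (K:ℝ) ≤ Real.sqrt (a/t) + 1 := (Nat.ceil_lt_add_one (Real.sqrt_nonneg _)).le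
      -- split the sum
      rw [← Finset.sum_filter_add_sum_filter_not (Finset.Icc 1 m) (· ≤ K)]
      have hpart1 : ∑ k ∈ Finset.filter (· ≤ K) (Finset.Icc 1 m),
          (1 - Real.exp (-2 * lam k * t)) / (2 * lam k) ≤ (K:ℝ) * t := by
        have hle : ∑ k ∈ Finset.filter (· ≤ K) (Finset.Icc 1 m),
            (1 - Real.exp (-2 * lam k * t)) / (2 * lam k)
            ≤ (Finset.filter (· ≤ K) (Finset.Icc 1 m)).card • t :=
          Finset.sum_le_card_nsmul _ _ _ (fun k hk =>
            hterm_t k (Finset.mem_Icc.mp (Finset.mem_filter.mp hk).1).1)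
        have hcard : (Finset.filter (· ≤ K) (Finset.Icc 1 m)).card ≤ K := by
          have hsub : Finset.filter (· ≤ K) (Finset.Icc 1 m) ⊆ Finset.Icc 1 K := by
            intro x hx
            simp only [Finset.mem_filter, Finset.mem_Icc] at hx ⊢
            omega
          calc (Finset.filter (· ≤ K) (Finset.Icc 1 m)).card
              ≤ (Finset.Icc 1 K).card := Finset.card_le_card hsub
            _ = K := by rw [Nat.card_Icc]; omega
        calc ∑ k ∈ Finset.filter (· ≤ K) (Finset.Icc 1 m),
              (1 - Real.exp (-2 * lam k * t)) / (2 * lam k)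
            ≤ (Finset.filter (· ≤ K) (Finset.Icc 1 m)).card • t := hle
          _ = ((Finset.filter (· ≤ K) (Finset.Icc 1 m)).card : ℝ) * t := nsmul_eq_mul _ _
          _ ≤ (K:ℝ) * t := by
              apply mul_le_mul_of_nonneg_right _ ht.le
              exact_mod_cast hcard
      have hpart2 : ∑ k ∈ Finset.filter (fun k => ¬ (k ≤ K)) (Finset.Icc 1 m),
          (1 - Real.exp (-2 * lam k * t)) / (2 * lam k) ≤ a / (K:ℝ) := by
        have hset : Finset.filter (fun k => ¬ (k ≤ K)) (Finset.Icc 1 m) = Finset.Icc (K+1) m := by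
          ext x
          simp only [Finset.mem_filter, Finset.mem_Icc, not_le]
          omega
        rw [hset]
        have htel := aux_tel K hK1 m
        have hmaxpos : (0:ℝ) ≤ 1/((max K m : ℕ):ℝ) := by positivity
        calc ∑ k ∈ Finset.Icc (K+1) m, (1 - Real.exp (-2 * lam k * t)) / (2 * lam k)
            ≤ ∑ k ∈ Finset.Icc (K+1) m, a / (k:ℝ)^2 :=
              Finset.sum_le_sum (fun k hk => hterm_a k (by
                have := (Finset.mem_Icc.mp hk).1; omega))
          _ = a * ∑ k ∈ Finset.Icc (K+1) m, (1:ℝ)/(k:ℝ)^2 := by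
              rw [Finset.mul_sum]; exact Finset.sum_congr rfl (fun k _ => by ring)
          _ ≤ a * (1/(K:ℝ)) := by nlinarith
          _ = a / (K:ℝ) := by ring
      -- now the arithmetic
      have hq1 : Real.sqrt (a/t) * t = u := by
        rw [hu, show a * t = (a/t) * t^2 by field_simp,
          Real.sqrt_mul (by positivity) (t^2), Real.sqrt_sq ht.le]
      have hq2 : a / Real.sqrt (a/t) = u := by
        rw [div_eq_iff (ne_of_gt hspos), hu, ← Real.sqrt_mul (by positivity),
          show a * t * (a/t) = a^2 by field_simp, Real.sqrt_sq ha0.le]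
      have htu : t ≤ u := by
        calc t = Real.sqrt (t^2) := (Real.sqrt_sq ht.le).symm
          _ ≤ Real.sqrt (a*t) := Real.sqrt_le_sqrt (by nlinarith)
          _ = u := hu.symm
      have hKt : (K:ℝ) * t ≤ u + t := by
        have := mul_le_mul_of_nonneg_right hKle ht.le
        rw [add_mul, one_mul, hq1] at this
        linarith
      have haK : a / (K:ℝ) ≤ u := by
        rw [← hq2]
        exact div_le_div_of_nonneg_left ha0.le hspos hKge
      have h3u : 3 * u ≤ Real.sqrt (2 * π * t / c₀) := by
        rw [show (3:ℝ) = Real.sqrt 9 by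
            rw [show (9:ℝ) = 3^2 by norm_num, Real.sqrt_sq]; norm_num,
          hu, ← Real.sqrt_mul (by norm_num)]
        apply Real.sqrt_le_sqrt
        rw [le_div_iff₀ hc₀]
        have h2 : 9 * (a * t) * c₀ = 9/2 * t := by rw [ha]; field_simp
        rw [h2]
        nlinarith
      linarith
  calc Real.sqrt (∑ k ∈ Finset.Icc 1 m, (1 - Real.exp (-2 * lam k * t)) / (2 * lam k))
      ≤ Real.sqrt (Real.sqrt (2 * π * t / c₀)) := Real.sqrt_le_sqrt hmain
    _ = (2 * π * t / c₀) ^ ((1:ℝ)/4) := by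
        rw [Real.sqrt_eq_rpow, Real.sqrt_eq_rpow, ← Real.rpow_mul hX0]
        norm_num
end

section
/- Let (λ_k) be a sequence of positive reals with λ_k ≥ c₀ k² for all k (some c₀ > 0) and λ_k ≤ C k² for all k (some C > 0). Fix δ > 0 and define for m ≥ 2, A_m = (2/π) ∑_{k=1}^m (∫_0^δ (λ_k e^{-λ_k t}/(1-e^{-2λ_k t})^{1/2}) · (c_k(t)/|c(t)|) dt)², where c_k(t) = ((1-e^{-2λ_k t})/(2λ_k))^{1/2} and |c(t)| = (∑_{j=1}^m c_j(t)²)^{1/2}. Then A_m → ∞ as m → ∞. -/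
open MeasureTheory Real Filter


private lemma tail_sq (N m : ℕ) (hN : 1 ≤ N) : ∑ j ∈ Finset.Ioc N m, (1:ℝ)/(j:ℝ)^2 ≤ 1/(N:ℝ) := by
  rcases le_or_gt N m with h | h
  · have h2 := sum_Ioc_inv_sq_le_sub (α := ℝ) (Nat.one_le_iff_ne_zero.mp hN) h
    have h3 : (0:ℝ) ≤ ((m:ℝ))⁻¹ := by positivity
    simp only [one_div]
    linarith
  · rw [Finset.Ioc_eq_empty (by omega)]; simp

private lemma full_sq (m : ℕ) : ∑ j ∈ Finset.Icc 1 m, (1:ℝ)/(j:ℝ)^2 ≤ 2 := by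
  rcases Nat.eq_zero_or_pos m with hm | hm
  · subst hm; simp
  · have he : Finset.Icc 1 m = Finset.Ioc 0 m := by
      ext x; simp [Nat.lt_iff_add_one_le]
    rw [he, ← Finset.sum_Ioc_consecutive _ (Nat.zero_le 1) hm]
    have h1 := tail_sq 1 m le_rfl
    simp only [Nat.cast_one, one_div] at h1 ⊢
    rw [show Finset.Ioc 0 1 = {1} from rfl]
    simp only [Finset.sum_singleton, Nat.cast_one]
    norm_num
    linarith

private lemma S_le (lam : ℕ → ℝ) (hpos : ∀ k : ℕ, 1 ≤ k → 0 < lam k)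
    (c₀ : ℝ) (hc₀ : 0 < c₀)
    (hlow : ∀ k : ℕ, 1 ≤ k → c₀ * (k:ℝ)^2 ≤ lam k) (m : ℕ) (t : ℝ) (ht : 0 < t) :
    ∑ j ∈ Finset.Icc 1 m, (1 - Real.exp (-2 * lam j * t)) / (2 * lam j)
      ≤ 3 * Real.sqrt t / Real.sqrt (2 * c₀) := by
  have hterm : ∀ j ∈ Finset.Icc 1 m,
      (1 - Real.exp (-2 * lam j * t)) / (2 * lam j) ≤ min t (1/(2*c₀*(j:ℝ)^2)) := by
    intro j hj
    rw [Finset.mem_Icc] at hj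
    have hj1 : 1 ≤ j := hj.1
    have hl : 0 < lam j := hpos j hj1
    have hjR : (1:ℝ) ≤ (j:ℝ) := by exact_mod_cast hj1
    have hlj := hlow j hj1
    have hE : 1 - Real.exp (-2 * lam j * t) ≤ 2 * lam j * t := by
      nlinarith [Real.add_one_le_exp (-2 * lam j * t)]
    have hE1 : 1 - Real.exp (-2 * lam j * t) ≤ 1 := by
      have := Real.exp_pos (-2 * lam j * t); linarith
    rw [le_min_iff]
    constructor
    · calc (1 - Real.exp (-2 * lam j * t)) / (2 * lam j)
          ≤ (2 * lam j * t) / (2 * lam j) := div_le_div_of_nonneg_right hE (by positivity)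
      _ = t := by field_simp
    · calc (1 - Real.exp (-2 * lam j * t)) / (2 * lam j)
          ≤ 1 / (2 * lam j) := div_le_div_of_nonneg_right hE1 (by positivity)
      _ ≤ 1/(2*c₀*(j:ℝ)^2) := by
            apply one_div_le_one_div_of_le (by positivity)
            nlinarith
  have hs : Real.sqrt t > 0 := Real.sqrt_pos.mpr ht
  have ha : Real.sqrt (2*c₀) > 0 := Real.sqrt_pos.mpr (by positivity)
  have hs2 : Real.sqrt t ^ 2 = t := Real.sq_sqrt ht.le
  have ha2 : Real.sqrt (2*c₀) ^ 2 = 2*c₀ := Real.sq_sqrt (by positivity)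
  refine le_trans (Finset.sum_le_sum hterm) ?_
  rcases le_or_gt (1/(2*c₀)) t with hcase | hcase
  · -- t large
    have h2ct : 1 ≤ 2*c₀*t := by rw [div_le_iff₀ (by positivity)] at hcase; linarith
    have hst : 1 ≤ Real.sqrt t * Real.sqrt (2*c₀) := by
      nlinarith [mul_pos hs ha]
    have h1 : ∀ j ∈ Finset.Icc 1 m, min t (1/(2*c₀*(j:ℝ)^2)) ≤ (1/(2*c₀)) * (1/(j:ℝ)^2) := by
      intro j hj
      rw [Finset.mem_Icc] at hj
      have hjR : (1:ℝ) ≤ (j:ℝ) := by exact_mod_cast hj.1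
      calc min t (1/(2*c₀*(j:ℝ)^2)) ≤ 1/(2*c₀*(j:ℝ)^2) := min_le_right _ _
        _ = (1/(2*c₀)) * (1/(j:ℝ)^2) := by field_simp
    calc ∑ j ∈ Finset.Icc 1 m, min t (1/(2*c₀*(j:ℝ)^2))
        ≤ ∑ j ∈ Finset.Icc 1 m, (1/(2*c₀)) * (1/(j:ℝ)^2) := Finset.sum_le_sum h1
      _ = (1/(2*c₀)) * ∑ j ∈ Finset.Icc 1 m, (1/(j:ℝ)^2) := by rw [Finset.mul_sum]
      _ ≤ (1/(2*c₀)) * 2 := mul_le_mul_of_nonneg_left (full_sq m) (by positivity)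
      _ = 1/c₀ := by ring
      _ ≤ 3 * Real.sqrt t / Real.sqrt (2*c₀) := by
          rw [div_le_div_iff₀ hc₀ ha]
          nlinarith [mul_le_mul_of_nonneg_right hst ha.le, mul_pos hc₀ hs, hs.le]
  · -- t small
    set b := Real.sqrt (2*c₀) * Real.sqrt t with hb
    have hbpos : 0 < b := by positivity
    have hbsq : b^2 = 2*c₀*t := by rw [hb, mul_pow, ha2, hs2]
    have h2ct : 2*c₀*t < 1 := by rw [lt_div_iff₀ (by positivity)] at hcase; linarith
    have hb1 : b < 1 := by nlinarith
    set N : ℕ := ⌈1/b⌉₊ with hN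
    have hN1 : 1 ≤ N := Nat.one_le_ceil_iff.mpr (by positivity)
    have hNpos : (0:ℝ) < (N:ℝ) := by exact_mod_cast hN1
    have hNge : 1/b ≤ (N:ℝ) := Nat.le_ceil _
    have hNle : (N:ℝ) ≤ 1/b + 1 := (Nat.ceil_lt_add_one (by positivity)).le
    rw [← Finset.sum_filter_add_sum_filter_not (Finset.Icc 1 m) (· ≤ N)]
    have hpart1 : ∑ j ∈ (Finset.Icc 1 m).filter (· ≤ N), min t (1/(2*c₀*(j:ℝ)^2))
        ≤ (N:ℝ) * t := by
      calc ∑ j ∈ (Finset.Icc 1 m).filter (· ≤ N), min t (1/(2*c₀*(j:ℝ)^2))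
          ≤ ∑ j ∈ (Finset.Icc 1 m).filter (· ≤ N), t :=
            Finset.sum_le_sum (fun j _ => min_le_left _ _)
        _ = ((Finset.Icc 1 m).filter (· ≤ N)).card * t := by rw [Finset.sum_const, nsmul_eq_mul]
        _ ≤ (N:ℝ) * t := by
            apply mul_le_mul_of_nonneg_right ?_ ht.le
            have hsub : (Finset.Icc 1 m).filter (· ≤ N) ⊆ Finset.Icc 1 N := by
              intro x hx
              simp only [Finset.mem_filter, Finset.mem_Icc] at hx ⊢
              exact ⟨hx.1.1, hx.2⟩
            have h5 := Finset.card_le_card hsub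
            rw [Nat.card_Icc] at h5
            have h6 : ((Finset.Icc 1 m).filter (· ≤ N)).card ≤ N := by omega
            exact_mod_cast h6
    have hpart2 : ∑ j ∈ (Finset.Icc 1 m).filter (¬ · ≤ N), min t (1/(2*c₀*(j:ℝ)^2))
        ≤ 1/(2*c₀) * (1/(N:ℝ)) := by
      calc ∑ j ∈ (Finset.Icc 1 m).filter (¬ · ≤ N), min t (1/(2*c₀*(j:ℝ)^2))
          ≤ ∑ j ∈ (Finset.Icc 1 m).filter (¬ · ≤ N), (1/(2*c₀)) * (1/(j:ℝ)^2) := by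
            apply Finset.sum_le_sum
            intro j hj
            simp only [Finset.mem_filter, Finset.mem_Icc] at hj
            have hjR : (1:ℝ) ≤ (j:ℝ) := by exact_mod_cast hj.1.1
            calc min t (1/(2*c₀*(j:ℝ)^2)) ≤ 1/(2*c₀*(j:ℝ)^2) := min_le_right _ _
              _ = (1/(2*c₀)) * (1/(j:ℝ)^2) := by field_simp
        _ ≤ ∑ j ∈ Finset.Ioc N m, (1/(2*c₀)) * (1/(j:ℝ)^2) := by
            apply Finset.sum_le_sum_of_subset_of_nonneg
            · intro x hx
              simp only [Finset.mem_filter, Finset.mem_Icc] at hx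
              simp only [Finset.mem_Ioc]
              omega
            · intro x _ _
              positivity
        _ = (1/(2*c₀)) * ∑ j ∈ Finset.Ioc N m, (1/(j:ℝ)^2) := by rw [Finset.mul_sum]
        _ ≤ 1/(2*c₀) * (1/(N:ℝ)) :=
            mul_le_mul_of_nonneg_left (tail_sq N m hN1) (by positivity)
    have hb1' : Real.sqrt (2*c₀) * Real.sqrt t ≤ 1 := by rw [← hb]; exact hb1.le
    have hNinv : 1/(N:ℝ) ≤ b := by
      rw [div_le_iff₀ hNpos]
      calc (1:ℝ) = (1/b)*b := by field_simp
        _ ≤ (N:ℝ)*b := mul_le_mul_of_nonneg_right hNge hbpos.le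
        _ = b*(N:ℝ) := mul_comm _ _
    have hNt : (N:ℝ) * t ≤ 2 * Real.sqrt t / Real.sqrt (2*c₀) := by
      have h1 : (N:ℝ) * t ≤ (1/b + 1) * t := mul_le_mul_of_nonneg_right hNle ht.le
      have h2 : t/b = Real.sqrt t / Real.sqrt (2*c₀) := by
        rw [hb, div_eq_div_iff (mul_pos ha hs).ne' ha.ne']
        linear_combination (-Real.sqrt (2*c₀)) * hs2
      have h3 : t ≤ Real.sqrt t / Real.sqrt (2*c₀) := by
        rw [le_div_iff₀ ha]
        nlinarith [mul_le_mul_of_nonneg_left hb1' hs.le]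
      calc (N:ℝ) * t ≤ (1/b + 1) * t := h1
        _ = t/b + t := by ring
        _ ≤ Real.sqrt t / Real.sqrt (2*c₀) + Real.sqrt t / Real.sqrt (2*c₀) := by
            rw [h2]; linarith
        _ = 2 * Real.sqrt t / Real.sqrt (2*c₀) := by ring
    have hb2 : 1/(2*c₀) * (1/(N:ℝ)) ≤ Real.sqrt t / Real.sqrt (2*c₀) := by
      calc 1/(2*c₀) * (1/(N:ℝ)) ≤ 1/(2*c₀) * b :=
            mul_le_mul_of_nonneg_left hNinv (by positivity)
        _ = Real.sqrt t / Real.sqrt (2*c₀) := by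
            rw [hb, eq_div_iff ha.ne', div_mul_eq_mul_div, div_mul_eq_mul_div,
              div_eq_iff (by positivity : (2*c₀) ≠ 0)]
            linear_combination Real.sqrt t * ha2
    calc _ ≤ (N:ℝ)*t + 1/(2*c₀) * (1/(N:ℝ)) := add_le_add hpart1 hpart2
      _ ≤ 2 * Real.sqrt t / Real.sqrt (2*c₀) + Real.sqrt t / Real.sqrt (2*c₀) := add_le_add hNt hb2
      _ = 3 * Real.sqrt t / Real.sqrt (2*c₀) := by ring

private lemma key_integral (lam : ℕ → ℝ) (hpos : ∀ k : ℕ, 1 ≤ k → 0 < lam k)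
    (c₀ : ℝ) (hc₀ : 0 < c₀)
    (hlow : ∀ k : ℕ, 1 ≤ k → c₀ * (k:ℝ)^2 ≤ lam k)
    (δ : ℝ) (hδ : 0 < δ) (m k : ℕ) (hk1 : 1 ≤ k) (hkm : k ≤ m)
    (hkδ : 1 ≤ lam k * δ) :
    Real.exp (-1) * Real.sqrt (lam k / 2) /
        Real.sqrt (3 / (Real.sqrt (2*c₀) * Real.sqrt (lam k))) / (2 * lam k)
      ≤ ∫ t in (0:ℝ)..δ,
          (lam k * Real.exp (-lam k * t) / Real.sqrt (1 - Real.exp (-2 * lam k * t))) *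
            (Real.sqrt ((1 - Real.exp (-2 * lam k * t)) / (2 * lam k)) /
              Real.sqrt (∑ j ∈ Finset.Icc 1 m,
                (1 - Real.exp (-2 * lam j * t)) / (2 * lam j))) := by
  set lk := lam k with hlkdef
  have hlk : 0 < lk := hpos k hk1
  set S : ℝ → ℝ := fun t => ∑ j ∈ Finset.Icc 1 m, (1 - Real.exp (-2 * lam j * t)) / (2 * lam j)
    with hSdef
  set f : ℝ → ℝ := fun t =>
      (lk * Real.exp (-lk * t) / Real.sqrt (1 - Real.exp (-2 * lk * t))) *
        (Real.sqrt ((1 - Real.exp (-2 * lk * t)) / (2 * lk)) / Real.sqrt (S t)) with hfdef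
  -- basic positivity facts
  have h1E : ∀ t : ℝ, 0 < t → 0 < 1 - Real.exp (-2 * lk * t) := by
    intro t ht
    have : Real.exp (-2 * lk * t) < 1 := Real.exp_lt_one_iff.mpr (by nlinarith)
    linarith
  have h1Ej : ∀ j : ℕ, 1 ≤ j → ∀ t : ℝ, 0 < t → 0 < 1 - Real.exp (-2 * lam j * t) := by
    intro j hj t ht
    have : Real.exp (-2 * lam j * t) < 1 :=
      Real.exp_lt_one_iff.mpr (by nlinarith [hpos j hj])
    linarith
  have hSpos : ∀ t : ℝ, 0 < t → 0 < S t := by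
    intro t ht
    apply Finset.sum_pos
    · intro j hj
      rw [Finset.mem_Icc] at hj
      exact div_pos (h1Ej j hj.1 t ht) (by have := hpos j hj.1; positivity)
    · exact ⟨k, Finset.mem_Icc.mpr ⟨hk1, hkm⟩⟩
  -- the simplified formula
  have hf_eq : ∀ t : ℝ, 0 < t →
      f t = Real.sqrt (lk / 2) * Real.exp (-lk * t) / Real.sqrt (S t) := by
    intro t ht
    have h1 := h1E t ht
    have hs1 : 0 < Real.sqrt (1 - Real.exp (-2 * lk * t)) := Real.sqrt_pos.mpr h1
    have hs2 : 0 < Real.sqrt (S t) := Real.sqrt_pos.mpr (hSpos t ht)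
    have hrt2 : Real.sqrt 2 ^ 2 = 2 := Real.sq_sqrt (by norm_num)
    have hrtlk : Real.sqrt lk ^ 2 = lk := Real.sq_sqrt hlk.le
    have hrt2p : (0:ℝ) < Real.sqrt 2 := by positivity
    have hrtlkp : (0:ℝ) < Real.sqrt lk := Real.sqrt_pos.mpr hlk
    rw [hfdef]
    simp only
    rw [Real.sqrt_div h1.le, Real.sqrt_div hlk.le,
      show (2:ℝ) * lk = lk * 2 by ring, Real.sqrt_mul hlk.le]
    field_simp
    have hs1' : 0 < Real.sqrt (1 - Real.exp (-(2 * lk * t))) := by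
      rw [show -(2*lk*t) = -2*lk*t by ring]; exact hs1
    have hs1'' : 0 < Real.sqrt (1 - Real.exp (-(lk * t * 2))) := by
      rw [show -(lk*t*2) = -2*lk*t by ring]; exact hs1
    rw [mul_div_assoc, div_self hs1''.ne', mul_one, hrtlk]
  have hexp2 : ∀ t : ℝ, Real.sqrt (Real.exp (-2*lk*t)) = Real.exp (-lk*t) := by
    intro t
    rw [show -2*lk*t = (-lk*t) + (-lk*t) by ring, Real.exp_add,
      Real.sqrt_mul_self (Real.exp_pos _).le]
  have hf_nonneg : ∀ t ∈ Set.Ioc (0:ℝ) δ, 0 ≤ f t := by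
    intro t ht
    rw [hf_eq t ht.1]
    positivity
  have hf_le : ∀ t ∈ Set.Ioc (0:ℝ) δ, f t ≤ Real.sqrt (lk/2) / Real.sqrt t := by
    intro t ht
    obtain ⟨ht0, _⟩ := ht
    rw [hf_eq t ht0]
    have hterm : (1 - Real.exp (-2 * lam k * t)) / (2 * lam k) ≤ S t := by
      rw [hSdef]
      exact Finset.single_le_sum
        (f := fun j => (1 - Real.exp (-2 * lam j * t)) / (2 * lam j))
        (fun j hj => le_of_lt (div_pos (h1Ej j (Finset.mem_Icc.mp hj).1 t ht0)
          (by have := hpos j (Finset.mem_Icc.mp hj).1; positivity)))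
        (Finset.mem_Icc.mpr ⟨hk1, hkm⟩)
    have hSlow : t * Real.exp (-2*lk*t) ≤ S t := by
      refine le_trans ?_ hterm
      rw [le_div_iff₀ (by positivity)]
      have hprod : Real.exp (-2*lk*t) * Real.exp (2*lk*t) = 1 := by
        rw [← Real.exp_add]; norm_num
      nlinarith [mul_le_mul_of_nonneg_right (Real.add_one_le_exp (2*lk*t))
        (Real.exp_pos (-2*lk*t)).le, hprod, Real.exp_pos (-2*lk*t)]
    have h2 : Real.sqrt t * Real.exp (-lk*t) ≤ Real.sqrt (S t) := by
      have h3 := Real.sqrt_le_sqrt hSlow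
      rwa [Real.sqrt_mul ht0.le, hexp2 t] at h3
    calc Real.sqrt (lk/2) * Real.exp (-lk*t) / Real.sqrt (S t)
        ≤ Real.sqrt (lk/2) * Real.exp (-lk*t) / (Real.sqrt t * Real.exp (-lk*t)) := by
          apply div_le_div_of_nonneg_left (by positivity) (by positivity) h2
      _ = Real.sqrt (lk/2) / Real.sqrt t := by
          rw [mul_div_mul_right _ _ (Real.exp_ne_zero _)]
  have hScont : Continuous S := by
    rw [hSdef]
    apply continuous_finset_sum
    intro j hj
    exact (continuous_const.sub ((continuous_const.mul continuous_id).rexp)).div_const _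
  have hfcont : ContinuousOn f (Set.Ioc 0 δ) := by
    rw [hfdef]
    apply ContinuousOn.mul
    · apply ContinuousOn.div
      · exact (continuous_const.mul ((continuous_const.mul continuous_id).rexp)).continuousOn
      · exact (Real.continuous_sqrt.comp
          (continuous_const.sub ((continuous_const.mul continuous_id).rexp))).continuousOn
      · intro t ht
        exact (Real.sqrt_pos.mpr (h1E t ht.1)).ne'
    · apply ContinuousOn.div
      · exact (Real.continuous_sqrt.comp
          ((continuous_const.sub ((continuous_const.mul continuous_id).rexp)).div_const _)).continuousOn
      · exact (Real.continuous_sqrt.comp hScont).continuousOn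
      · intro t ht
        exact (Real.sqrt_pos.mpr (hSpos t ht.1)).ne'
  have hInt : IntegrableOn f (Set.Ioc 0 δ) := by
    have hbint : IntegrableOn (fun t : ℝ => Real.sqrt (lk/2) * t ^ (-(1/2) : ℝ))
        (Set.Ioc 0 δ) := by
      have h := (intervalIntegral.intervalIntegrable_rpow' (a := (0:ℝ)) (b := δ)
        (r := -(1/2)) (by norm_num)).const_mul (Real.sqrt (lk/2))
      rwa [intervalIntegrable_iff_integrableOn_Ioc_of_le hδ.le] at h
    apply hbint.mono' (hfcont.aestronglyMeasurable measurableSet_Ioc)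
    rw [ae_restrict_iff' measurableSet_Ioc]
    filter_upwards with t ht
    rw [Real.norm_eq_abs, abs_of_nonneg (hf_nonneg t ht)]
    have hrp : (t:ℝ) ^ (-(1/2) : ℝ) = (Real.sqrt t)⁻¹ := by
      rw [Real.rpow_neg ht.1.le, ← Real.sqrt_eq_rpow]
    rw [hrp, ← div_eq_mul_inv]
    exact hf_le t ht
  rw [intervalIntegral.integral_of_le hδ.le]
  have h1δ : 1/lk ≤ δ := by
    rw [div_le_iff₀ hlk, mul_comm]
    exact hkδ
  have hsub : Set.Ioc (1/(2*lk)) (1/lk) ⊆ Set.Ioc 0 δ :=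
    Set.Ioc_subset_Ioc (by positivity) h1δ
  have hmono : ∫ t in Set.Ioc (1/(2*lk)) (1/lk), f t ≤ ∫ t in Set.Ioc 0 δ, f t := by
    apply setIntegral_mono_set hInt
    · rw [Filter.EventuallyLE, ae_restrict_iff' measurableSet_Ioc]
      exact Filter.Eventually.of_forall (fun t ht => hf_nonneg t ht)
    · exact HasSubset.Subset.eventuallyLE hsub
  set D : ℝ := 3 / (Real.sqrt (2*c₀) * Real.sqrt lk) with hDdef
  have hrtc : (0:ℝ) < Real.sqrt (2*c₀) := Real.sqrt_pos.mpr (by positivity)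
  have hrtlkp : (0:ℝ) < Real.sqrt lk := Real.sqrt_pos.mpr hlk
  have hDpos : 0 < D := by rw [hDdef]; positivity
  have hflow : ∀ t ∈ Set.Ioc (1/(2*lk)) (1/lk),
      Real.exp (-1) * Real.sqrt (lk/2) / Real.sqrt D ≤ f t := by
    intro t ht
    obtain ⟨ht1, ht2⟩ := ht
    have ht0 : 0 < t := lt_trans (by positivity) ht1
    rw [hf_eq t ht0]
    have hsqt : Real.sqrt t ≤ (Real.sqrt lk)⁻¹ := by
      rw [← Real.sqrt_inv]
      exact Real.sqrt_le_sqrt (by rw [← one_div]; exact ht2)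
    have hSD : S t ≤ D := by
      refine le_trans (S_le lam hpos c₀ hc₀ hlow m t ht0) ?_
      rw [hDdef]
      calc 3 * Real.sqrt t / Real.sqrt (2*c₀)
          ≤ 3 * (Real.sqrt lk)⁻¹ / Real.sqrt (2*c₀) := by
            gcongr
        _ = 3 / (Real.sqrt (2*c₀) * Real.sqrt lk) := by
            field_simp
    have hsS : Real.sqrt (S t) ≤ Real.sqrt D := Real.sqrt_le_sqrt hSD
    have hexp : Real.exp (-1) ≤ Real.exp (-lk*t) := by
      apply Real.exp_le_exp.mpr
      have : lk * t ≤ 1 := by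
        calc lk * t ≤ lk * (1/lk) := by
              apply mul_le_mul_of_nonneg_left ht2 hlk.le
          _ = 1 := by field_simp
      linarith
    apply div_le_div₀ (by positivity) ?_ (Real.sqrt_pos.mpr (hSpos t ht0)) hsS
    calc Real.exp (-1) * Real.sqrt (lk/2) = Real.sqrt (lk/2) * Real.exp (-1) := mul_comm _ _
      _ ≤ Real.sqrt (lk/2) * Real.exp (-lk*t) :=
          mul_le_mul_of_nonneg_left hexp (Real.sqrt_nonneg _)
  have hIs : IntegrableOn f (Set.Ioc (1/(2*lk)) (1/lk)) := hInt.mono_set hsub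
  have hconstInt : IntegrableOn (fun _ : ℝ => Real.exp (-1) * Real.sqrt (lk/2) / Real.sqrt D)
      (Set.Ioc (1/(2*lk)) (1/lk)) := by
    apply (integrableOn_const_iff (C := Real.exp (-1) * Real.sqrt (lk/2) / Real.sqrt D)).mpr
    right
    exact measure_Ioc_lt_top
  have hc := MeasureTheory.setIntegral_mono_on hconstInt hIs measurableSet_Ioc hflow
  rw [MeasureTheory.setIntegral_const, Real.volume_real_Ioc] at hc
  have hr : (1:ℝ)/lk - 1/(2*lk) = 1/(2*lk) := by field_simp; ring
  rw [hr, max_eq_left (by positivity), smul_eq_mul] at hc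
  calc Real.exp (-1) * Real.sqrt (lk/2) / Real.sqrt D / (2 * lk)
      = 1/(2*lk) * (Real.exp (-1) * Real.sqrt (lk/2) / Real.sqrt D) := by ring
    _ ≤ ∫ t in Set.Ioc (1/(2*lk)) (1/lk), f t := hc
    _ ≤ ∫ t in Set.Ioc 0 δ, f t := hmono


private lemma sq_bound (c₀ C lk : ℝ) (hc₀ : 0 < c₀) (hC : 0 < C) (hlk : 0 < lk)
    (k : ℕ) (hk1 : 1 ≤ k) (hup : lk ≤ C * (k:ℝ)^2) :
    Real.exp (-1)^2 * Real.sqrt (2*c₀) / (24 * Real.sqrt C) / k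
      ≤ (Real.exp (-1) * Real.sqrt (lk/2) /
          Real.sqrt (3/(Real.sqrt (2*c₀) * Real.sqrt lk)) / (2*lk))^2 := by
  have hkR : (1:ℝ) ≤ (k:ℝ) := by exact_mod_cast hk1
  set sl := Real.sqrt lk with hsl
  have slp : 0 < sl := Real.sqrt_pos.mpr hlk
  have sl2 : sl^2 = lk := Real.sq_sqrt hlk.le
  have hac : 0 < Real.sqrt (2*c₀) := Real.sqrt_pos.mpr (by positivity)
  have hacC : 0 < Real.sqrt C := Real.sqrt_pos.mpr hC
  have hslC : sl ≤ Real.sqrt C * (k:ℝ) := by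
    rw [hsl]
    calc Real.sqrt lk ≤ Real.sqrt (C * (k:ℝ)^2) := Real.sqrt_le_sqrt hup
      _ = Real.sqrt C * (k:ℝ) := by
          rw [Real.sqrt_mul hC.le, Real.sqrt_sq (by positivity)]
  have hD : (0:ℝ) < 3/(Real.sqrt (2*c₀) * sl) := by positivity
  rw [div_pow, div_pow, mul_pow, Real.sq_sqrt (by positivity : (0:ℝ) ≤ lk/2),
    Real.sq_sqrt hD.le, ← sl2]
  have hkpos : (0:ℝ) < (k:ℝ) := by linarith
  rw [div_le_iff₀ hkpos, div_le_iff₀ (by positivity : (0:ℝ) < 24 * Real.sqrt C)]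
  have hrhs : Real.exp (-1)^2 * (sl^2/2) / (3/(Real.sqrt (2*c₀) * sl)) / (2*sl^2)^2
      = Real.exp (-1)^2 * Real.sqrt (2*c₀) / (24 * sl) := by
    field_simp
    ring
  rw [hrhs]
  have h1 : Real.exp (-1)^2 * Real.sqrt (2*c₀) / (24*sl) * (k:ℝ) * (24 * Real.sqrt C)
      = (Real.exp (-1)^2 * Real.sqrt (2*c₀) / sl) * (Real.sqrt C * (k:ℝ)) := by
    field_simp
  rw [h1]
  calc Real.exp (-1)^2 * Real.sqrt (2*c₀)
      = (Real.exp (-1)^2 * Real.sqrt (2*c₀) / sl) * sl := by field_simp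
    _ ≤ (Real.exp (-1)^2 * Real.sqrt (2*c₀) / sl) * (Real.sqrt C * (k:ℝ)) := by
        apply mul_le_mul_of_nonneg_left hslC (by positivity)

theorem stmt_9 (lam : ℕ → ℝ) (hpos : ∀ k : ℕ, 1 ≤ k → 0 < lam k)
    (c₀ C : ℝ) (hc₀ : 0 < c₀) (hC : 0 < C)
    (hlow : ∀ k : ℕ, 1 ≤ k → c₀ * (k : ℝ) ^ 2 ≤ lam k)
    (hup : ∀ k : ℕ, 1 ≤ k → lam k ≤ C * (k : ℝ) ^ 2)
    (δ : ℝ) (hδ : 0 < δ) :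
    Tendsto (fun m : ℕ =>
      (2 / π) * ∑ k ∈ Finset.Icc 1 m,
        (∫ t in (0:ℝ)..δ,
          (lam k * Real.exp (-lam k * t) / Real.sqrt (1 - Real.exp (-2 * lam k * t))) *
            (Real.sqrt ((1 - Real.exp (-2 * lam k * t)) / (2 * lam k)) /
              Real.sqrt (∑ j ∈ Finset.Icc 1 m,
                (1 - Real.exp (-2 * lam j * t)) / (2 * lam j)))) ^ 2)
      atTop atTop := by
  set k₀ : ℕ := ⌈1/(c₀*δ)⌉₊ + 1 with hk₀
  set c₄ : ℝ := Real.exp (-1)^2 * Real.sqrt (2*c₀) / (24 * Real.sqrt C) with hc₄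
  have hc₄pos : 0 < c₄ := by rw [hc₄]; positivity
  set h : ℕ → ℝ := fun k => if k₀ ≤ k then c₄ / k else 0 with hh
  have hhnonneg : ∀ n, 0 ≤ h n := by
    intro n; rw [hh]; dsimp only; split
    · positivity
    · exact le_rfl
  have hdiv : Tendsto (fun n => ∑ i ∈ Finset.range n, h i) atTop atTop := by
    rw [← not_summable_iff_tendsto_nat_atTop_of_nonneg hhnonneg]
    intro hs
    have h1 : Summable (fun n : ℕ => h (n + k₀)) := (summable_nat_add_iff k₀).mpr hs
    have h2 : Summable (fun n : ℕ => c₄ * (1/(((n + k₀ : ℕ)) : ℝ))) := by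
      apply h1.congr
      intro n
      rw [hh]
      simp only
      rw [if_pos (by omega)]
      rw [mul_one_div]
    have h3 : Summable (fun n : ℕ => 1/(((n + k₀ : ℕ)) : ℝ)) :=
      (summable_mul_left_iff hc₄pos.ne').mp h2
    have h4 : Summable (fun n : ℕ => 1/(n : ℝ)) := (summable_nat_add_iff k₀).mp h3
    exact Real.not_summable_one_div_natCast h4
  have hsum_eq : ∀ m : ℕ, ∑ k ∈ Finset.Icc 1 m, h k = ∑ i ∈ Finset.range (m+1), h i := by
    intro m
    apply Finset.sum_subset
    · intro x hx
      rw [Finset.mem_Icc] at hx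
      rw [Finset.mem_range]
      omega
    · intro x hx hnx
      rw [Finset.mem_range] at hx
      rw [Finset.mem_Icc] at hnx
      have hx0 : x = 0 := by omega
      subst hx0
      rw [hh]
      simp only
      rw [if_neg (by omega)]
  have hbound : ∀ m : ℕ,
      (2/π) * ∑ i ∈ Finset.range (m+1), h i
        ≤ (2 / π) * ∑ k ∈ Finset.Icc 1 m,
        (∫ t in (0:ℝ)..δ,
          (lam k * Real.exp (-lam k * t) / Real.sqrt (1 - Real.exp (-2 * lam k * t))) *
            (Real.sqrt ((1 - Real.exp (-2 * lam k * t)) / (2 * lam k)) /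
              Real.sqrt (∑ j ∈ Finset.Icc 1 m,
                (1 - Real.exp (-2 * lam j * t)) / (2 * lam j)))) ^ 2 := by
    intro m
    rw [← hsum_eq m]
    apply mul_le_mul_of_nonneg_left ?_ (by positivity)
    apply Finset.sum_le_sum
    intro k hk
    rw [Finset.mem_Icc] at hk
    rw [hh]
    simp only
    split_ifs with hcond
    · have hk1 : 1 ≤ k := hk.1
      have hkR : (1:ℝ) ≤ (k:ℝ) := by exact_mod_cast hk1
      have hkδ : 1 ≤ lam k * δ := by
        have hke : (k₀:ℝ) ≤ (k:ℝ) := by exact_mod_cast hcond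
        have hceil : 1/(c₀*δ) ≤ (⌈1/(c₀*δ)⌉₊ : ℝ) := Nat.le_ceil _
        have hk₀R : (⌈1/(c₀*δ)⌉₊ : ℝ) + 1 = (k₀ : ℝ) := by rw [hk₀]; push_cast; ring
        have hkc : 1/(c₀*δ) ≤ (k:ℝ) := by linarith
        rw [div_le_iff₀ (by positivity)] at hkc
        have hl := hlow k hk1
        nlinarith
      have hL := key_integral lam hpos c₀ hc₀ hlow δ hδ m k hk1 hk.2 hkδ
      have hLpos : 0 ≤ Real.exp (-1) * Real.sqrt (lam k / 2) /
          Real.sqrt (3 / (Real.sqrt (2*c₀) * Real.sqrt (lam k))) / (2 * lam k) := by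
        have := hpos k hk1
        positivity
      calc c₄/(k:ℝ) ≤ (Real.exp (-1) * Real.sqrt (lam k / 2) /
          Real.sqrt (3 / (Real.sqrt (2*c₀) * Real.sqrt (lam k))) / (2 * lam k))^2 := by
            rw [hc₄]
            exact sq_bound c₀ C (lam k) hc₀ hC (hpos k hk1) k hk1 (hup k hk1)
        _ ≤ _ := pow_le_pow_left₀ hLpos hL 2
    · exact sq_nonneg _
  have hT : Tendsto (fun m : ℕ => (2/π) * ∑ i ∈ Finset.range (m+1), h i) atTop atTop := by
    apply Tendsto.const_mul_atTop (by positivity : (0:ℝ) < 2/π)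
    exact hdiv.comp (tendsto_add_atTop_nat 1)
  exact tendsto_atTop_mono hbound hT
end
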